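/- If c²b₁b₂ > D, then for every delay τ ≥ 0 the characteristic function P has at least one real root λ > 0; consequently the trivial rest point of the delay-coupled FitzHugh–Nagumo system is linearly unstable for all delays. -/

import Mathlib

noncomputable section

/-- Coefficient A = b₁+b₂−2a -/
def cA (a b₁ b₂ : ℝ) : ℝ := b₁ + b₂ - 2*a
/-- Coefficient B = b₁b₂−2a(b₁+b₂)+a²+2 -/
def cB (a b₁ b₂ : ℝ) : ℝ := b₁*b₂ - 2*a*(b₁+b₂) + a^2 + 2
/-- Coefficient C = (a²+1)(b₁+b₂)−2ab₁b₂−2a -/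
def cC (a b₁ b₂ : ℝ) : ℝ := (a^2+1)*(b₁+b₂) - 2*a*b₁*b₂ - 2*a
/-- Coefficient D = a²b₁b₂−a(b₁+b₂)+1 -/
def cD (a b₁ b₂ : ℝ) : ℝ := a^2*b₁*b₂ - a*(b₁+b₂) + 1
/-- Coefficient E = c² -/
def cE (c : ℝ) : ℝ := c^2
/-- P̂ = A²−2B -/
def qP (a b₁ b₂ c : ℝ) : ℝ := (cA a b₁ b₂)^2 - 2*(cB a b₁ b₂)
/-- Q̂ = B²+2D−2AC−E² -/
def qQ (a b₁ b₂ c : ℝ) : ℝ :=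
  (cB a b₁ b₂)^2 + 2*(cD a b₁ b₂) - 2*(cA a b₁ b₂)*(cC a b₁ b₂) - (cE c)^2
/-- R̂ = C²−2BD−E²(b₁²+b₂²) -/
def qR (a b₁ b₂ c : ℝ) : ℝ :=
  (cC a b₁ b₂)^2 - 2*(cB a b₁ b₂)*(cD a b₁ b₂) - (cE c)^2*(b₁^2+b₂^2)
/-- Ŝ = D²−E²(b₁b₂)² -/
def qS (a b₁ b₂ c : ℝ) : ℝ := (cD a b₁ b₂)^2 - (cE c)^2*(b₁*b₂)^2
/-- Auxiliary quartic h(z) = z⁴+P̂z³+Q̂z²+R̂z+Ŝ -/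
def hq (a b₁ b₂ c z : ℝ) : ℝ :=
  z^4 + qP a b₁ b₂ c * z^3 + qQ a b₁ b₂ c * z^2 + qR a b₁ b₂ c * z + qS a b₁ b₂ c
/-- Derivative h′(z) = 4z³+3P̂z²+2Q̂z+R̂ -/
def hq' (a b₁ b₂ c z : ℝ) : ℝ :=
  4*z^3 + 3*qP a b₁ b₂ c * z^2 + 2*qQ a b₁ b₂ c * z + qR a b₁ b₂ c
/-- Characteristic function P(λ) = λ⁴+Aλ³+Bλ²+Cλ+D − E(λ+b₁)(λ+b₂)e^{−2λτ} -/
def charP (a b₁ b₂ c τ : ℝ) (z : ℂ) : ℂ :=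
  z^4 + (cA a b₁ b₂ : ℂ)*z^3 + (cB a b₁ b₂ : ℂ)*z^2 + (cC a b₁ b₂ : ℂ)*z + (cD a b₁ b₂ : ℂ)
    - (cE c : ℂ) * (z + (b₁:ℂ)) * (z + (b₂:ℂ)) * Complex.exp (-(2*z*(τ:ℂ)))


def fR (a b₁ b₂ c τ x : ℝ) : ℝ :=
  x^4 + cA a b₁ b₂ * x^3 + cB a b₁ b₂ * x^2 + cC a b₁ b₂ * x + cD a b₁ b₂
    - cE c * (x + b₁) * (x + b₂) * Real.exp (-(2*x*τ))

lemma charP_ofReal (a b₁ b₂ c τ x : ℝ) :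
    charP a b₁ b₂ c τ (x:ℂ) = (fR a b₁ b₂ c τ x : ℂ) := by
  simp only [charP, fR]
  push_cast [Complex.ofReal_exp]
  ring_nf

lemma fR_continuous (a b₁ b₂ c τ : ℝ) : Continuous (fR a b₁ b₂ c τ) := by
  unfold fR
  fun_prop

set_option maxHeartbeats 800000 in
lemma fR_pos_at (a b₁ b₂ c τ : ℝ) (hτ : 0 ≤ τ) (hb₁ : 0 < b₁) (hb₂ : 0 < b₂) :
    ∃ M : ℝ, 0 < M ∧ 0 < fR a b₁ b₂ c τ M := by
  set A := cA a b₁ b₂ with hA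
  set B := cB a b₁ b₂ - cE c with hB
  set C := cC a b₁ b₂ - cE c * (b₁ + b₂) with hC
  set D := cD a b₁ b₂ - cE c * b₁ * b₂ with hD
  set M := |A| + |B| + |C| + |D| + 1 with hM
  have hM1 : (1:ℝ) ≤ M := by
    have := abs_nonneg A; have := abs_nonneg B; have := abs_nonneg C; have := abs_nonneg D
    linarith
  have hM0 : 0 < M := lt_of_lt_of_le one_pos hM1
  have hg : 0 < M^4 + A * M^3 + B * M^2 + C * M + D := by
    nlinarith [neg_abs_le A, neg_abs_le B, neg_abs_le C, neg_abs_le D,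
      abs_nonneg A, abs_nonneg B, abs_nonneg C, abs_nonneg D,
      pow_le_pow_right₀ (le_trans one_le_two (by nlinarith : (2:ℝ) ≤ 1 + M))
        (by norm_num : 2 ≤ 3),
      mul_le_mul_of_nonneg_left (sq_nonneg (M-1)) hM0.le,
      mul_pos (mul_pos hM0 hM0) hM0]
  refine ⟨M, hM0, ?_⟩
  have hE : 0 ≤ cE c := sq_nonneg c
  have hexp0 : Real.exp (-(2*M*τ)) ≤ 1 := by
    rw [Real.exp_le_one_iff]; nlinarith
  have hexp1 : 0 < Real.exp (-(2*M*τ)) := Real.exp_pos _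
  have hprod : 0 ≤ cE c * (M + b₁) * (M + b₂) := by
    apply mul_nonneg (mul_nonneg hE (by linarith)) (by linarith)
  have key : cE c * (M + b₁) * (M + b₂) * Real.exp (-(2*M*τ))
      ≤ cE c * (M + b₁) * (M + b₂) := by nlinarith
  unfold fR
  rw [hA] at hg
  rw [hB, hC, hD] at hg
  nlinarith [hg]

theorem stmt_17 (a b₁ b₂ c : ℝ) (ha : 0 < a) (hb₁ : 0 < b₁) (hb₂ : 0 < b₂)
    (hgt : cD a b₁ b₂ < c^2 * b₁ * b₂) :
    ∀ τ : ℝ, 0 ≤ τ → ∃ x : ℝ, 0 < x ∧ charP a b₁ b₂ c τ (x:ℂ) = 0 := by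
  intro τ hτ
  obtain ⟨M, hM0, hMpos⟩ := fR_pos_at a b₁ b₂ c τ hτ hb₁ hb₂
  have hf0 : fR a b₁ b₂ c τ 0 < 0 := by
    unfold fR cE
    simp [Real.exp_zero]
    nlinarith
  obtain ⟨x, hx, hfx⟩ := intermediate_value_Ioo (le_of_lt hM0)
    (fR_continuous a b₁ b₂ c τ).continuousOn (Set.mem_Ioo.mpr ⟨hf0, hMpos⟩)
  exact ⟨x, hx.1, by rw [charP_ofReal, hfx]; simp⟩
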